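/- Fix a real number $a > 0$ and set $p = \frac{9}{4}(2+a)$. Let $x_0 \ge 3$ be the real solution of $\frac{x}{p \ln x} = 3$. Then for every integer $n \ge \lceil x_0 \rceil$, if $n$ points $X_1, \dots, X_n$ are placed independently and uniformly at random on $[0,1]$, and $[0,1]$ is partitioned into $N = \lfloor \frac{n}{p \ln n} \rfloor$ consecutive subintervals each of length $\frac{1}{N}$, then the probability that some subinterval contains fewer than $\frac{n}{3N}$ of the points is less than $\frac{N}{n^{1 + a/2}}$. -/

import Mathlib

open MeasureTheory
open scoped Classical

/-- The `j`-th of `N` consecutive subintervals of `[0,1]` of length `1/N`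
(`j = 1, …, N`; the last one is taken closed). -/
def subInterval (N j : ℕ) : Set ℝ :=
  if j < N then Set.Ico (((j : ℝ) - 1) / N) ((j : ℝ) / N)
  else Set.Icc (((j : ℝ) - 1) / N) 1

/-- The uniform (product Lebesgue) probability measure on `[0,1]ⁿ`. -/
noncomputable def uniformCube (n : ℕ) : Measure (Fin n → ℝ) :=
  Measure.pi fun _ => volume.restrict (Set.Icc 0 1)

open scoped ENNReal

lemma lintegral_pi_prod_const {μ : Measure ℝ} [SigmaFinite μ] {f : ℝ → ℝ≥0∞}
    (hf : Measurable f) (n : ℕ) :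
    ∫⁻ x : Fin n → ℝ, ∏ i, f (x i) ∂Measure.pi (fun _ => μ) = (∫⁻ x, f x ∂μ) ^ n := by
  induction n with
  | zero => simp
  | succ n ih =>
    rw [((measurePreserving_piFinSuccAbove (fun _ : Fin (n+1) => μ) 0).symm).lintegral_map_equiv
      (fun x : Fin (n+1) → ℝ => ∏ i, f (x i)) _]
    have : ∀ y : ℝ × (Fin n → ℝ),
        (∏ i, f (((MeasurableEquiv.piFinSuccAbove (fun _ => ℝ) 0).symm y) i))
          = f y.1 * ∏ i, f (y.2 i) := by
      intro y
      simp [MeasurableEquiv.piFinSuccAbove_symm_apply, Fin.prod_univ_succ, Fin.zero_succAbove]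
    simp_rw [this]
    rw [lintegral_prod_mul (f := f) (g := fun x : Fin n → ℝ => ∏ i, f (x i)) hf.aemeasurable
      (Finset.measurable_prod _ fun i _ => hf.comp (measurable_pi_apply i)).aemeasurable]
    rw [ih, pow_succ]; ring

lemma subInterval_meas (N j : ℕ) : MeasurableSet (subInterval N j) := by
  unfold subInterval; split <;> [exact measurableSet_Ico; exact measurableSet_Icc]

lemma subInterval_subset (N j : ℕ) (hj1 : 1 ≤ j) (hjN : j ≤ N) :
    subInterval N j ⊆ Set.Icc 0 1 := by
  have hN0 : (0:ℝ) < N := Nat.cast_pos.mpr (hj1.trans hjN)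
  have hj1' : (1:ℝ) ≤ j := by exact_mod_cast hj1
  have hjN' : (j:ℝ) ≤ N := by exact_mod_cast hjN
  unfold subInterval
  split_ifs with h
  · intro x hx
    constructor
    · exact le_trans (by apply div_nonneg (by linarith) hN0.le) hx.1
    · exact le_trans hx.2.le (by rw [div_le_one hN0]; exact hjN')
  · intro x hx
    constructor
    · exact le_trans (by apply div_nonneg (by linarith) hN0.le) hx.1
    · exact hx.2

lemma subInterval_vol (N j : ℕ) (hj1 : 1 ≤ j) (hjN : j ≤ N) :
    volume (subInterval N j) = ENNReal.ofReal (1 / N) := by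
  have hN0 : (0:ℝ) < N := Nat.cast_pos.mpr (hj1.trans hjN)
  unfold subInterval
  split_ifs with h
  · rw [Real.volume_Ico]
    congr 1
    field_simp
    ring
  · have hjN' : j = N := le_antisymm hjN (not_lt.mp h)
    subst hjN'
    rw [Real.volume_Icc]
    congr 1
    field_simp
    ring

lemma lintegral_g (N j : ℕ) (hj1 : 1 ≤ j) (hjN : j ≤ N) :
    ∫⁻ x, (if x ∈ subInterval N j then ENNReal.ofReal (1/3) else 1)
        ∂(volume.restrict (Set.Icc (0:ℝ) 1))
      = ENNReal.ofReal (1 - 2 / (3 * N)) := by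
  have hN0 : (0:ℝ) < N := Nat.cast_pos.mpr (hj1.trans hjN)
  have hN1 : (1:ℝ) ≤ N := by exact_mod_cast hj1.trans hjN
  set μ := volume.restrict (Set.Icc (0:ℝ) 1) with hμdef
  set S := subInterval N j with hSdef
  have hS := subInterval_meas N j
  have hμS : μ S = ENNReal.ofReal (1/N) := by
    rw [hμdef, Measure.restrict_apply hS,
      Set.inter_eq_self_of_subset_left (subInterval_subset N j hj1 hjN),
      subInterval_vol N j hj1 hjN]
  have huniv : μ Set.univ = 1 := by
    simp [hμdef, Real.volume_Icc]
  have hμSc : μ Sᶜ = 1 - ENNReal.ofReal (1/N) := by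
    rw [measure_compl hS (by rw [hμS]; exact ENNReal.ofReal_ne_top), huniv, hμS]
  rw [← lintegral_add_compl _ hS]
  have h1 : ∫⁻ x in S, (if x ∈ S then ENNReal.ofReal (1/3) else 1) ∂μ
      = ENNReal.ofReal (1/3) * μ S := by
    rw [setLIntegral_congr_fun hS (fun x hx => if_pos hx), setLIntegral_const]
  have h2 : ∫⁻ x in Sᶜ, (if x ∈ S then ENNReal.ofReal (1/3) else 1) ∂μ = μ Sᶜ := by
    rw [setLIntegral_congr_fun hS.compl (fun x hx => if_neg hx), setLIntegral_one]
  rw [h1, h2, hμS, hμSc, ← ENNReal.ofReal_mul (by norm_num), ← ENNReal.ofReal_one,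
    ← ENNReal.ofReal_sub _ (by positivity), ← ENNReal.ofReal_add (by positivity) (by
      rw [sub_nonneg, div_le_one hN0]; exact hN1)]
  congr 1
  field_simp
  ring

lemma markov_bound (n N j : ℕ) (hj1 : 1 ≤ j) (hjN : j ≤ N) (m : ℝ) :
    uniformCube n {X : Fin n → ℝ |
        ((Finset.univ.filter fun i : Fin n => X i ∈ subInterval N j).card : ℝ) < m}
      ≤ ENNReal.ofReal ((3:ℝ) ^ m * (1 - 2 / (3 * N)) ^ n) := by
  classical
  have hN0 : (0:ℝ) < N := Nat.cast_pos.mpr (hj1.trans hjN)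
  have hN1 : (1:ℝ) ≤ N := by exact_mod_cast hj1.trans hjN
  have hbase : (0:ℝ) ≤ 1 - 2 / (3 * N) := by
    have h23 : 2 / (3 * (N:ℝ)) ≤ 2 / 3 := by
      apply div_le_div_of_nonneg_left (by norm_num) (by norm_num) (by linarith)
    linarith
  set S := subInterval N j with hSdef
  set g : ℝ → ℝ≥0∞ := fun x => if x ∈ S then ENNReal.ofReal (1/3) else 1 with hg
  have hgmeas : Measurable g :=
    Measurable.ite (subInterval_meas N j) measurable_const measurable_const
  set F : (Fin n → ℝ) → ℝ≥0∞ := fun X => ∏ i, g (X i) with hF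
  have hFmeas : Measurable F :=
    Finset.measurable_prod _ fun i _ => hgmeas.comp (measurable_pi_apply i)
  have hFeq : ∀ X : Fin n → ℝ,
      F X = ENNReal.ofReal (1/3) ^ (Finset.univ.filter fun i : Fin n => X i ∈ S).card := by
    intro X
    rw [hF]
    simp only [hg]
    rw [Finset.prod_ite, Finset.prod_const, Finset.prod_const_one, mul_one]
  set c := ENNReal.ofReal ((1/3:ℝ) ^ m) with hc
  have hc0 : c ≠ 0 := by
    rw [hc, ne_eq, ENNReal.ofReal_eq_zero, not_le]
    positivity
  have hctop : c ≠ ⊤ := ENNReal.ofReal_ne_top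
  have hsub : {X : Fin n → ℝ |
        ((Finset.univ.filter fun i : Fin n => X i ∈ subInterval N j).card : ℝ) < m}
      ⊆ {X | c ≤ F X} := by
    intro X hX
    simp only [Set.mem_setOf_eq] at hX ⊢
    rw [hFeq]
    set k := (Finset.univ.filter fun i : Fin n => X i ∈ S).card with hk
    calc c ≤ ENNReal.ofReal ((1/3:ℝ) ^ (k:ℝ)) := by
          apply ENNReal.ofReal_le_ofReal
          exact Real.rpow_le_rpow_of_exponent_ge (by norm_num) (by norm_num) hX.le
      _ = _ := by rw [Real.rpow_natCast, ENNReal.ofReal_pow (by norm_num)]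
  have markov := mul_meas_ge_le_lintegral₀ (μ := uniformCube n) hFmeas.aemeasurable c
  have hlint : ∫⁻ X, F X ∂uniformCube n = ENNReal.ofReal (1 - 2 / (3 * N)) ^ n := by
    rw [uniformCube, lintegral_pi_prod_const hgmeas n, lintegral_g N j hj1 hjN]
  calc uniformCube n _ ≤ uniformCube n {X | c ≤ F X} := measure_mono hsub
    _ = c⁻¹ * (c * uniformCube n {X | c ≤ F X}) := by
        rw [← mul_assoc, ENNReal.inv_mul_cancel hc0 hctop, one_mul]
    _ ≤ c⁻¹ * ∫⁻ X, F X ∂uniformCube n := mul_le_mul_right markov _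
    _ = ENNReal.ofReal ((3:ℝ) ^ m) * ENNReal.ofReal (1 - 2 / (3 * N)) ^ n := by
        rw [hlint, hc, ← ENNReal.ofReal_inv_of_pos (by positivity)]
        congr 2
        rw [one_div, Real.inv_rpow (by norm_num), inv_inv]
    _ = ENNReal.ofReal ((3:ℝ) ^ m * (1 - 2 / (3 * N)) ^ n) := by
        rw [ENNReal.ofReal_mul (by positivity), ENNReal.ofReal_pow hbase]

lemma log3_lt : Real.log 3 < 4/3 := by
  rw [Real.log_lt_iff_lt_exp (by norm_num)]
  by_contra hcon
  push_neg at hcon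
  have h1 : Real.exp 4 ≤ 27 := by
    have h : Real.exp (4:ℝ) = Real.exp (4/3) ^ (3:ℕ) := by
      rw [← Real.exp_nat_mul]; norm_num
    rw [h]
    calc Real.exp (4/3) ^ (3:ℕ) ≤ 3 ^ (3:ℕ) := pow_le_pow_left₀ (Real.exp_pos _).le hcon 3
      _ = 27 := by norm_num
  have h2 : (27:ℝ) < Real.exp 4 := by
    have h4 : Real.exp (4:ℝ) = Real.exp 1 ^ (4:ℕ) := by
      rw [← Real.exp_nat_mul]; norm_num
    have := Real.exp_one_gt_d9
    calc (27:ℝ) < 2.7 ^ (4:ℕ) := by norm_num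
      _ < Real.exp 1 ^ (4:ℕ) := by
          apply pow_lt_pow_left₀ (by linarith) (by norm_num)
          norm_num
      _ = Real.exp 4 := h4.symm
  linarith

/-- Fix real `a > 0`, `p = (9/4)(2+a)`, and let `x₀ ≥ 3` solve
`x₀/(p ln x₀) = 3`. For every `n ≥ ⌈x₀⌉`, placing `n` uniform points on `[0,1]` and
partitioning `[0,1]` into `N = ⌊n/(p ln n)⌋` equal subintervals, the probability that some
subinterval contains fewer than `n/(3N)` of the points is less than `N / n^{1+a/2}`. -/
theorem stmt9 (a : ℝ) (ha : 0 < a) (x₀ : ℝ) (hx₀ : 3 ≤ x₀)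
    (hx₀eq : x₀ / ((9 / 4 * (2 + a)) * Real.log x₀) = 3)
    (n : ℕ) (hn : ⌈x₀⌉₊ ≤ n) :
    uniformCube n
      {X : Fin n → ℝ | ∃ j ∈ Finset.Icc 1 ⌊(n : ℝ) / ((9 / 4 * (2 + a)) * Real.log n)⌋₊,
        ((Finset.univ.filter fun i : Fin n =>
            X i ∈ subInterval ⌊(n : ℝ) / ((9 / 4 * (2 + a)) * Real.log n)⌋₊ j).card : ℝ)
          < (n : ℝ) / (3 * (⌊(n : ℝ) / ((9 / 4 * (2 + a)) * Real.log n)⌋₊ : ℝ))}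
      < ENNReal.ofReal
          ((⌊(n : ℝ) / ((9 / 4 * (2 + a)) * Real.log n)⌋₊ : ℝ) /
            (n : ℝ) ^ ((1 : ℝ) + a / 2)) := by
  classical
  set p : ℝ := 9 / 4 * (2 + a) with hp
  have hp0 : 0 < p := by rw [hp]; linarith
  have hxn : x₀ ≤ (n:ℝ) := le_trans (Nat.le_ceil x₀) (by exact_mod_cast hn)
  have hn3 : (3:ℝ) ≤ n := le_trans hx₀ hxn
  have hn0 : (0:ℝ) < n := by linarith
  set L : ℝ := Real.log n with hL
  have hlogx₀ : 0 < Real.log x₀ := Real.log_pos (by linarith)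
  have hlogn : 0 < L := Real.log_pos (by linarith)
  -- the ratio is at least 3
  have hr3 : (3:ℝ) ≤ (n : ℝ) / (p * L) := by
    have he : Real.exp 1 ≤ x₀ := by
      have := Real.exp_one_lt_d9; linarith
    have hen : Real.exp 1 ≤ (n:ℝ) := le_trans he hxn
    have hanti : Real.log (n:ℝ) / (n:ℝ) ≤ Real.log x₀ / x₀ :=
      Real.log_div_self_antitoneOn he hen hxn
    have hcross : Real.log n * x₀ ≤ Real.log x₀ * n := by
      rw [div_le_div_iff₀ (by linarith) (by linarith)] at hanti
      linarith
    rw [← hx₀eq]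
    rw [div_le_div_iff₀ (by positivity) (by positivity)]
    nlinarith [mul_le_mul_of_nonneg_left hcross hp0.le]
  set N : ℕ := ⌊(n : ℝ) / (p * L)⌋₊ with hNdef
  have hN3 : 3 ≤ N := Nat.le_floor (by exact_mod_cast hr3)
  have hN1 : 1 ≤ N := le_trans (by norm_num) hN3
  have hN0 : (0:ℝ) < N := by exact_mod_cast Nat.lt_of_lt_of_le (by norm_num) hN3
  have hNr : (N:ℝ) ≤ (n : ℝ) / (p * L) := Nat.floor_le (by positivity)
  -- q := n/N ≥ p L
  have hq : p * L ≤ (n:ℝ) / N := by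
    rw [le_div_iff₀ hN0]
    rw [le_div_iff₀ (by positivity)] at hNr
    linarith
  set m : ℝ := (n:ℝ) / (3 * N) with hm
  set b : ℝ := (3:ℝ) ^ m * (1 - 2 / (3 * N)) ^ n with hb
  -- union bound
  have hset : {X : Fin n → ℝ | ∃ j ∈ Finset.Icc 1 N,
        ((Finset.univ.filter fun i : Fin n => X i ∈ subInterval N j).card : ℝ) < m}
      = ⋃ j ∈ Finset.Icc 1 N, {X : Fin n → ℝ |
        ((Finset.univ.filter fun i : Fin n => X i ∈ subInterval N j).card : ℝ) < m} := by
    ext X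
    simp [Set.mem_iUnion]
  have hU : uniformCube n {X : Fin n → ℝ | ∃ j ∈ Finset.Icc 1 N,
        ((Finset.univ.filter fun i : Fin n => X i ∈ subInterval N j).card : ℝ) < m}
      ≤ (N : ℝ≥0∞) * ENNReal.ofReal b := by
    rw [hset]
    calc uniformCube n _
        ≤ ∑ j ∈ Finset.Icc 1 N, uniformCube n {X : Fin n → ℝ |
            ((Finset.univ.filter fun i : Fin n => X i ∈ subInterval N j).card : ℝ) < m} :=
          measure_biUnion_finset_le _ _
      _ ≤ ∑ j ∈ Finset.Icc 1 N, ENNReal.ofReal b :=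
          Finset.sum_le_sum fun j hj =>
            markov_bound n N j (Finset.mem_Icc.mp hj).1 (Finset.mem_Icc.mp hj).2 m
      _ = (N : ℝ≥0∞) * ENNReal.ofReal b := by
          rw [Finset.sum_const, Nat.card_Icc, nsmul_eq_mul]
          norm_num
  -- the key real inequality
  have hbase : (0:ℝ) ≤ 1 - 2 / (3 * N) := by
    have h23 : 2 / (3 * (N:ℝ)) ≤ 2 / 3 := by
      apply div_le_div_of_nonneg_left (by norm_num) (by norm_num) (by
        have : (1:ℝ) ≤ N := by exact_mod_cast hN1
        linarith)
    linarith
  have hkey : b < ((n:ℝ) ^ ((1:ℝ) + a / 2))⁻¹ := by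
    have h1 : (1 - 2 / (3 * (N:ℝ))) ^ n ≤ Real.exp (-(2 / (3 * N))) ^ n := by
      apply pow_le_pow_left₀ hbase
      nlinarith [Real.add_one_le_exp (-(2 / (3 * (N:ℝ))))]
    have h2 : Real.exp (-(2 / (3 * (N:ℝ)))) ^ n = Real.exp ((n:ℝ) * -(2 / (3 * N))) := by
      rw [Real.exp_nat_mul]
    have h3 : (3:ℝ) ^ m = Real.exp (Real.log 3 * m) := Real.rpow_def_of_pos (by norm_num) m
    have hble : b ≤ Real.exp (Real.log 3 * m + (n:ℝ) * -(2 / (3 * N))) := by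
      rw [hb, h3, Real.exp_add, ← h2]
      exact mul_le_mul_of_nonneg_left h1 (Real.exp_pos _).le
    have hexp : Real.log 3 * m + (n:ℝ) * -(2 / (3 * N)) < -(((1:ℝ) + a / 2) * L) := by
      have hNne : (N:ℝ) ≠ 0 := hN0.ne'
      have hm3 : m = ((n:ℝ)/N) / 3 := by rw [hm, div_div, mul_comm]
      set q : ℝ := (n:ℝ)/N with hqdef
      have hrw : Real.log 3 * m + (n:ℝ) * -(2 / (3 * (N:ℝ)))
          = Real.log 3 * (q/3) - 2*q/3 := by
        rw [hm3, hqdef]; field_simp; ring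
      rw [hrw]
      have hA : (2 - Real.log 3) * ((9/4*(2+a))*L) ≤ (2 - Real.log 3) * q := by
        rw [← hp]
        exact mul_le_mul_of_nonneg_left hq (by linarith [log3_lt])
      have hB : 0 < (2 - Real.log 3 - 2/3) * ((2+a)*L) :=
        mul_pos (by linarith [log3_lt]) (mul_pos (by linarith) hlogn)
      linarith [hA, hB]
    have h4 : Real.exp (-(((1:ℝ) + a / 2) * L)) = ((n:ℝ) ^ ((1:ℝ) + a / 2))⁻¹ := by
      rw [← Real.rpow_neg hn0.le, Real.rpow_def_of_pos hn0]
      congr 1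
      rw [hL]; ring
    calc b ≤ Real.exp (Real.log 3 * m + (n:ℝ) * -(2 / (3 * N))) := hble
      _ < Real.exp (-(((1:ℝ) + a / 2) * L)) := Real.exp_lt_exp.mpr hexp
      _ = ((n:ℝ) ^ ((1:ℝ) + a / 2))⁻¹ := h4
  have hrpos : (0:ℝ) < (n:ℝ) ^ ((1:ℝ) + a / 2) := Real.rpow_pos_of_pos hn0 _
  calc uniformCube n _ ≤ (N : ℝ≥0∞) * ENNReal.ofReal b := hU
    _ = ENNReal.ofReal ((N:ℝ) * b) := by
        rw [ENNReal.ofReal_mul (Nat.cast_nonneg N), ENNReal.ofReal_natCast]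
    _ < ENNReal.ofReal ((N : ℝ) / (n : ℝ) ^ ((1 : ℝ) + a / 2)) := by
        rw [ENNReal.ofReal_lt_ofReal_iff (by positivity)]
        rw [div_eq_mul_inv]
        exact mul_lt_mul_of_pos_left hkey hN0
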